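/- Let k be a field and K = k(t) the rational function field in one variable. Then the d-th level satisfies s_d(k) = s_d(k(t)), where s_d(F) is the least s such that -1 is a sum of s d-th powers in F (or ∞ if no such s exists). -/

import Mathlib

open Polynomial

private lemma coeff_pow_aux {k : Type*} [Field k] {d N : ℕ} (hd : 0 < d)
    (r : k[X]) (hr : r.natDegree ≤ N) :
    (r ^ d).coeff (d * N) = r.coeff N ^ d := by
  rcases eq_or_lt_of_le hr with h | h
  · rw [← h, Polynomial.coeff_pow_mul_natDegree, Polynomial.coeff_natDegree]
  · rw [Polynomial.coeff_eq_zero_of_natDegree_lt h, zero_pow hd.ne',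
      Polynomial.coeff_eq_zero_of_natDegree_lt]
    rw [Polynomial.natDegree_pow]
    exact (Nat.mul_lt_mul_left hd).mpr h

theorem stmt_12 {k : Type*} [Field k] (d : ℕ) (hd : 0 < d) :
    sInf {s : ℕ | 0 < s ∧ ∃ a : Fin s → k, ∑ i, a i ^ d = -1} =
      sInf {s : ℕ | 0 < s ∧ ∃ a : Fin s → RatFunc k, ∑ i, a i ^ d = -1} := by
  congr 1
  ext s
  simp only [Set.mem_setOf_eq]
  constructor
  · rintro ⟨hs, a, ha⟩
    refine ⟨hs, fun i => algebraMap k (RatFunc k) (a i), ?_⟩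
    have : ∑ i, (algebraMap k (RatFunc k) (a i)) ^ d
        = algebraMap k (RatFunc k) (∑ i, a i ^ d) := by
      rw [map_sum]
      exact Finset.sum_congr rfl fun i _ => (map_pow _ _ _).symm
    rw [this, ha, map_neg, map_one]
  · rintro ⟨hs, a, ha⟩
    refine ⟨hs, ?_⟩
    haveI : Nonempty (Fin s) := Fin.pos_iff_nonempty.mp hs
    set q : k[X] := ∏ j, (a j).denom with hq
    have hq0 : q ≠ 0 := Finset.prod_ne_zero_iff.mpr fun j _ => RatFunc.denom_ne_zero _
    set p : Fin s → k[X] :=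
      fun i => (a i).num * ∏ j ∈ Finset.univ.erase i, (a j).denom with hp
    have key : ∀ i, algebraMap k[X] (RatFunc k) (p i)
        = a i * algebraMap k[X] (RatFunc k) q := by
      intro i
      have hdi : (algebraMap k[X] (RatFunc k)) (a i).denom ≠ 0 :=
        RatFunc.algebraMap_ne_zero (RatFunc.denom_ne_zero _)
      have hnum : a i * algebraMap k[X] (RatFunc k) (a i).denom
          = algebraMap k[X] (RatFunc k) (a i).num := by
        rw [eq_comm, ← div_eq_iff hdi]
        exact RatFunc.num_div_denom (a i)
      rw [hp, hq, ← Finset.prod_erase_mul _ _ (Finset.mem_univ i)]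
      simp only [map_mul, map_prod]
      rw [← mul_assoc, mul_comm (a i), mul_assoc, hnum, mul_comm]
    have main : (∑ i, (p i) ^ d) + q ^ d = 0 := by
      apply IsFractionRing.injective k[X] (RatFunc k)
      rw [map_add, map_sum, map_pow, map_zero]
      have : ∀ i ∈ Finset.univ, (algebraMap k[X] (RatFunc k)) ((p i) ^ d)
          = a i ^ d * (algebraMap k[X] (RatFunc k) q) ^ d := by
        intro i _
        rw [map_pow, key, mul_pow]
      rw [Finset.sum_congr rfl this, ← Finset.sum_mul, ha]
      ring
    set N : ℕ := q.natDegree ⊔ Finset.univ.sup (fun i => (p i).natDegree) with hN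
    have hpN : ∀ i, (p i).natDegree ≤ N := fun i =>
      le_trans (Finset.le_sup (f := fun i => (p i).natDegree) (Finset.mem_univ i))
        le_sup_right
    have hsum : (∑ i, (p i).coeff N ^ d) + (q.coeff N) ^ d = 0 := by
      have h := congrArg (fun f => Polynomial.coeff f (d * N)) main
      simp only [Polynomial.coeff_add, Polynomial.finset_sum_coeff,
        Polynomial.coeff_zero] at h
      rw [coeff_pow_aux hd q le_sup_left] at h
      rw [Finset.sum_congr rfl (fun i _ => coeff_pow_aux hd (p i) (hpN i))] at h
      exact h
    by_cases hc : q.coeff N = 0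
    · -- the top degree is attained by some p i0
      have hNq : q.natDegree < N := by
        rcases lt_or_eq_of_le (le_sup_left : q.natDegree ≤ N) with h | h
        · exact h
        · exfalso
          apply Polynomial.leadingCoeff_ne_zero.mpr hq0
          rw [Polynomial.leadingCoeff, h]
          exact hc
      have hNsup : Finset.univ.sup (fun i => (p i).natDegree) = N := by
        have h1 : N = max q.natDegree (Finset.univ.sup fun i => (p i).natDegree) := by
          exact hN
        omega
      obtain ⟨i0, -, hi0⟩ := Finset.exists_mem_eq_sup Finset.univ Finset.univ_nonempty
        (fun i => (p i).natDegree)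
      have hi0N : (p i0).natDegree = N := by rw [← hi0, hNsup]
      have hp0 : p i0 ≠ 0 := by
        intro h
        rw [h, Polynomial.natDegree_zero] at hi0N
        omega
      have hb0 : (p i0).coeff N ≠ 0 := by
        rw [← hi0N, Polynomial.coeff_natDegree]
        exact Polynomial.leadingCoeff_ne_zero.mpr hp0
      refine ⟨fun i => if i = i0 then 0 else (p i).coeff N / (p i0).coeff N, ?_⟩
      have h1 : ∑ i, (p i).coeff N ^ d = 0 := by
        have := hsum
        rw [hc, zero_pow hd.ne', add_zero] at this
        exact this
      rw [← Finset.add_sum_erase _ _ (Finset.mem_univ i0)] at h1 ⊢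
      beta_reduce
      rw [if_pos rfl, zero_pow hd.ne', zero_add]
      have h2 : ∀ i ∈ Finset.univ.erase i0,
          (if i = i0 then (0 : k) else (p i).coeff N / (p i0).coeff N) ^ d
            = (p i).coeff N ^ d / (p i0).coeff N ^ d := by
        intro i hi
        rw [if_neg (Finset.ne_of_mem_erase hi), div_pow]
      rw [Finset.sum_congr rfl h2, ← Finset.sum_div, div_eq_iff (pow_ne_zero _ hb0)]
      linear_combination h1
    · refine ⟨fun i => (p i).coeff N / q.coeff N, ?_⟩
      have hcd : (q.coeff N) ^ d ≠ 0 := pow_ne_zero _ hc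
      have : ∑ i, ((p i).coeff N / q.coeff N) ^ d
          = (∑ i, (p i).coeff N ^ d) / (q.coeff N) ^ d := by
        rw [Finset.sum_div]
        exact Finset.sum_congr rfl fun i _ => div_pow _ _ _
      rw [this, div_eq_iff hcd]
      linear_combination hsum
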